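/- In any feasible integer solution x of the routing master problem, if the partial path (v_1, ..., v_k) is fully traversed by one selected route r (i.e., x_{v_h, v_{h+1}} = 1 for h < k, with all v_2, ..., v_k customers), and x_{v_k, v_j} = 1 for some earlier customer v_j with j < k, then route r visits customer v_j twice, contradicting elementarity; hence x(Δ^{E,+}_k(P)) = 0 whenever (v_1,...,v_k) is traversed. -/

import Mathlib

variable {V : Type*}

/-- The list of arcs (consecutive node pairs) of a node list. -/
def arcsOf (l : List V) : List (V × V) := l.zip l.tail

/-- The length of a path given as a node list: the sum of its arc distances. -/
def plen (d : V → V → ℝ) (l : List V) : ℝ :=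
  ((arcsOf l).map (fun a => d a.1 a.2)).sum

/-- A path is TSP-violating if some path on the same node set with
the same endpoints is strictly shorter. -/
def TSPviolating (d : V → V → ℝ) (P : List V) : Prop :=
  ∃ Q : List V, Q.Perm P ∧ Q.head? = P.head? ∧ Q.getLast? = P.getLast? ∧
    plen d Q < plen d P

/-- Length of the route visiting customers `c` in order,
starting and ending at the depot. -/
def routeLen (d : V → V → ℝ) (depot : V) (c : List V) : ℝ :=
  plen d (depot :: c ++ [depot])

/-- A route (given by its ordered customer list) is TSP-optimal:
no reordering of its customers gives a strictly shorter route. -/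
def TSPopt (d : V → V → ℝ) (depot : V) (c : List V) : Prop :=
  ∀ c' : List V, c'.Perm c → routeLen d depot c ≤ routeLen d depot c'

/-- Arc flow of a set of selected routes: the number of selected routes using arc `a`. -/
def flow [DecidableEq V] (depot : V) (routes : List (List V)) (a : V × V) : ℤ :=
  (routes.map (fun c => ((arcsOf (depot :: c ++ [depot])).count a : ℤ))).sum

/-- Arc membership gives aligned positions. -/
lemma mem_arcsOf {l : List V} {u w : V} (h : (u, w) ∈ arcsOf l) :
    ∃ i, l[i]? = some u ∧ l[i + 1]? = some w := by
  obtain ⟨i, hi, hget⟩ := List.mem_iff_getElem.mp h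
  have hlen : i < l.tail.length := by
    have := hi
    simp only [arcsOf, List.length_zip, lt_min_iff] at this
    exact this.2
  have h1 : i < l.length := by
    have := l.length_tail
    omega
  have h2 : i + 1 < l.length := by
    have := l.length_tail
    omega
  simp only [arcsOf, List.getElem_zip] at hget
  refine ⟨i, ?_, ?_⟩
  · rw [List.getElem?_eq_getElem h1]
    exact congrArg some (congrArg Prod.fst hget)
  · rw [List.getElem?_eq_getElem h2]
    have := List.getElem_tail hlen
    have h3 : l.tail[i] = w := congrArg Prod.snd hget
    rw [this] at h3
    exact congrArg some h3

/-- A non-depot node read off from the route list is a customer of the route. -/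
lemma mem_route_of_getElem? {depot u : V} {r : List V} {i : ℕ}
    (h : (depot :: r ++ [depot])[i]? = some u) (hu : u ≠ depot) : u ∈ r := by
  have hm : u ∈ depot :: r ++ [depot] := List.mem_of_getElem? h
  simp only [List.mem_cons, List.mem_append, List.mem_singleton] at hm
  tauto

/-- A non-depot node occupies a unique position in a route's node list. -/
lemma pos_unique {depot u : V} {r : List V} (hnd : r.Nodup) (hdep : depot ∉ r)
    (hu : u ≠ depot) {i i' : ℕ}
    (h : (depot :: r ++ [depot])[i]? = some u)
    (h' : (depot :: r ++ [depot])[i']? = some u) : i = i' := by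
  have key : ∀ m : ℕ, (depot :: r ++ [depot])[m]? = some u →
      ∃ n, m = n + 1 ∧ ∃ hn : n < r.length, r[n] = u := by
    intro m hm
    by_cases hlt : m < (depot :: r).length
    · rw [List.getElem?_append_left hlt] at hm
      cases m with
      | zero =>
        rw [List.getElem?_cons_zero, Option.some.injEq] at hm
        exact absurd hm.symm hu
      | succ n =>
        rw [List.getElem?_cons_succ] at hm
        have hn : n < r.length := by
          simp only [List.length_cons] at hlt; omega
        rw [List.getElem?_eq_getElem hn, Option.some.injEq] at hm
        exact ⟨n, rfl, hn, hm⟩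
    · rw [List.getElem?_append_right (Nat.not_lt.mp hlt)] at hm
      have := List.mem_of_getElem? hm
      simp only [List.mem_singleton] at this
      exact absurd this.symm (Ne.symm hu)
  obtain ⟨n, rfl, hn, hrn⟩ := key i h
  obtain ⟨n', rfl, hn', hrn'⟩ := key i' h'
  have : n = n' := (hnd.getElem_inj_iff).mp (hrn.trans hrn'.symm)
  omega

/-- If a member of a list has value at least one under a nonnegative function,
the sum of values is at least one. -/
lemma one_le_sum_map {α : Type*} {f : α → ℤ} {l : List α}
    (hnn : ∀ x ∈ l, 0 ≤ f x) {b : α} (hb : b ∈ l) (hfb : 1 ≤ f b) :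
    1 ≤ (l.map f).sum := by
  refine le_trans hfb (List.single_le_sum ?_ _ (List.mem_map.mpr ⟨b, hb, rfl⟩))
  intro x hx
  obtain ⟨y, hy, rfl⟩ := List.mem_map.mp hx
  exact hnn y hy

/-- If two distinct members of a list have value at least one under a nonnegative
integer-valued function, the total sum is at least two. -/
lemma two_le_sum_map {α : Type*} {f : α → ℤ} :
    ∀ {l : List α}, (∀ x ∈ l, 0 ≤ f x) → ∀ {a b : α}, a ∈ l → b ∈ l → a ≠ b →
      1 ≤ f a → 1 ≤ f b → 2 ≤ (l.map f).sum
  | [], _, _, _, ha, _, _, _, _ => absurd ha List.not_mem_nil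
  | c :: t, hnn, a, b, ha, hb, hab, hfa, hfb => by
    have hnnt : ∀ x ∈ t, 0 ≤ f x := fun x hx => hnn x (List.mem_cons_of_mem _ hx)
    rw [List.map_cons, List.sum_cons]
    rcases List.mem_cons.mp ha with rfl | hat
    · have hbt : b ∈ t := by
        rcases List.mem_cons.mp hb with rfl | hbt
        · exact absurd rfl hab
        · exact hbt
      have h1 := one_le_sum_map hnnt hbt hfb
      omega
    · rcases List.mem_cons.mp hb with rfl | hbt
      · have h1 := one_le_sum_map hnnt hat hfa
        omega
      · have h1 := two_le_sum_map hnnt hat hbt hab hfa hfb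
        have h2 := hnn c List.mem_cons_self
        omega

/-- Each customer belongs to a unique route. -/
lemma route_unique [DecidableEq V] {depot : V} {routes : List (List V)}
    (hcover : ∀ u : V, u ≠ depot → (routes.map (fun c => (c.count u : ℤ))).sum = 1)
    {u : V} (hu : u ≠ depot) {r r' : List V} (hr : r ∈ routes) (hr' : r' ∈ routes)
    (hur : u ∈ r) (hur' : u ∈ r') : r = r' := by
  by_contra hne
  have h1 : (1 : ℤ) ≤ (r.count u : ℤ) := by
    exact_mod_cast List.count_pos_iff.mpr hur
  have h2 : (1 : ℤ) ≤ (r'.count u : ℤ) := by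
    exact_mod_cast List.count_pos_iff.mpr hur'
  have h3 := two_le_sum_map (f := fun c => ((c.count u : ℤ)))
    (fun x _ => by positivity) hr hr' hne h1 h2
  have := hcover u hu
  omega

/-- If an arc has flow one, some selected route uses it. -/
lemma flow_one_exists [DecidableEq V] {depot : V} {routes : List (List V)} {a : V × V}
    (h : flow depot routes a = 1) :
    ∃ r ∈ routes, a ∈ arcsOf (depot :: r ++ [depot]) := by
  by_contra hc
  push_neg at hc
  have h0 : flow depot routes a = 0 := by
    unfold flow
    apply List.sum_eq_zero
    intro x hx
    obtain ⟨c, hc1, rfl⟩ := List.mem_map.mp hx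
    rw [List.count_eq_zero.mpr (hc c hc1)]
    rfl
  omega

/-- elementarity lifting. In a feasible integer solution, if the partial
path `(v₁,…,v_k)` of pairwise distinct nodes (with `v₂,…,v_k` customers) is fully
traversed, then no arc from `v_k` back to an earlier non-depot node of the path carries
flow: `x(Δ^{E,+}_k(P)) = 0`. -/
theorem elementarity_lifting_zero_flow [DecidableEq V]
    (depot : V) (routes : List (List V))
    (hnd : ∀ c ∈ routes, c.Nodup) (hdep : ∀ c ∈ routes, depot ∉ c)
    (hne : ∀ c ∈ routes, c ≠ [])
    (hcover : ∀ u : V, u ≠ depot → (routes.map (fun c => (c.count u : ℤ))).sum = 1)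
    (k : ℕ) (hk : 2 ≤ k) (v : ℕ → V)
    (hinj : ∀ i j, 1 ≤ i → i ≤ k → 1 ≤ j → j ≤ k → v i = v j → i = j)
    (hcust : ∀ i, 2 ≤ i → i ≤ k → v i ≠ depot)
    (htrav : ∀ h, 1 ≤ h → h ≤ k - 1 → flow depot routes (v h, v (h + 1)) = 1)
    (j : ℕ) (hj1 : 1 ≤ j) (hjk : j ≤ k - 1) (hjdep : v j ≠ depot) :
    flow depot routes (v k, v j) = 0 := by
  unfold flow
  apply List.sum_eq_zero
  intro x hx
  obtain ⟨r, hr, rfl⟩ := List.mem_map.mp hx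
  suffices hnotin : (v k, v j) ∉ arcsOf (depot :: r ++ [depot]) by
    rw [List.count_eq_zero.mpr hnotin]; rfl
  intro harc
  have hndr := hnd r hr
  have hdepr := hdep r hr
  have hkd : v k ≠ depot := hcust k hk le_rfl
  obtain ⟨i', hik, hij⟩ := mem_arcsOf harc
  -- `hik : L[i']? = v k`, `hij : L[i'+1]? = v j`
  have key : ∀ m, m ≤ k - j →
      ∃ i, (depot :: r ++ [depot])[i]? = some (v (k - m)) ∧
        (depot :: r ++ [depot])[i + m]? = some (v k) := by
    intro m
    induction m with
    | zero => exact fun _ => ⟨i', by simpa using hik, by simpa using hik⟩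
    | succ m ih =>
      intro hm
      obtain ⟨i, h1, h2⟩ := ih (by omega)
      have hfl := htrav (k - (m + 1)) (by omega) (by omega)
      obtain ⟨r', hr', harc'⟩ := flow_one_exists hfl
      obtain ⟨i'', g1, g2⟩ := mem_arcsOf harc'
      have hsucc : k - (m + 1) + 1 = k - m := by omega
      rw [hsucc] at g2
      have hvd : v (k - m) ≠ depot := hcust _ (by omega) (by omega)
      have hmem' : v (k - m) ∈ r' := mem_route_of_getElem? g2 hvd
      have hmem : v (k - m) ∈ r := mem_route_of_getElem? h1 hvd
      have hrr : r' = r := route_unique hcover hvd hr' hr hmem' hmem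
      subst hrr
      have hpos : i'' + 1 = i := pos_unique hndr hdepr hvd g2 h1
      refine ⟨i'', g1, ?_⟩
      rw [show i'' + (m + 1) = i + m by omega]
      exact h2
  obtain ⟨i, hvj, hvk⟩ := key (k - j) le_rfl
  rw [show k - (k - j) = j by omega] at hvj
  have e1 : i + (k - j) = i' := pos_unique hndr hdepr hkd hvk hik
  have e2 : i = i' + 1 := pos_unique hndr hdepr hjdep hvj hij
  omega
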